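/- For every type-preserving boundary strategy χ of Max, every strategy μ of Min in the closed region graph T̄, every configuration q, and every n ∈ ℕ, the total time of the first n transitions of the run from q under (μ,χ) is at least the total time of the first n transitions of the run from q under (μ[q,χ],χ), where μ[q,χ] is any type-preserving boundary strategy of Min such that the run from q under (μ[q,χ],χ) has the same type as the run from q under (μ,χ). Symmetrically, for every type-preserving boundary strategy μ of Min, every strategy χ of Max in T̄, every configuration q and every n ∈ ℕ, the total time of the first n transitions of the run from q under (μ,χ) is at most that of the run from q under (μ,χ[q,μ]), where χ[q,μ] is any type-preserving boundary strategy of Max such that the run from q under (μ,χ[q,μ]) has the same type as the run from q under (μ,χ). -/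

import Mathlib

noncomputable section

attribute [local instance] Classical.propDecidable

/-- A two-player (Min/Max) game arena with real-valued step costs. -/
structure Arena (Conf Move : Type) where
  Tr : Conf → Move → Conf → Prop
  cost : Conf → Move → ℝ
  IsMin : Conf → Prop

namespace Arena

variable {Conf Move : Type}

/-- A finite run in the arena. -/
structure FinRun (G : Arena Conf Move) where
  n : ℕ
  q : Fin (n + 1) → Conf
  m : Fin n → Move
  valid : ∀ i : Fin n, G.Tr (q i.castSucc) (m i) (q i.succ)

/-- The last configuration of a finite run. -/
def FinRun.last {G : Arena Conf Move} (r : G.FinRun) : Conf := r.q (Fin.last r.n)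

/-- The first configuration of a finite run. -/
def FinRun.first {G : Arena Conf Move} (r : G.FinRun) : Conf := r.q 0

/-- The trivial run consisting of a single configuration. -/
def single (G : Arena Conf Move) (q0 : Conf) : G.FinRun :=
  ⟨0, fun _ => q0, Fin.elim0, fun i => i.elim0⟩

/-- Extending a finite run by one transition. -/
def FinRun.extend {G : Arena Conf Move} (r : G.FinRun) (mv : Move) (q' : Conf)
    (h : G.Tr r.last mv q') : G.FinRun where
  n := r.n + 1
  q := Fin.snoc r.q q'
  m := Fin.snoc r.m mv
  valid := by
    intro i
    induction i using Fin.lastCases with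
    | last =>
        rw [Fin.succ_last, Fin.snoc_last, Fin.snoc_last, Fin.snoc_castSucc]
        exact h
    | cast j =>
        rw [Fin.snoc_castSucc, Fin.snoc_castSucc, ← Fin.castSucc_succ, Fin.snoc_castSucc]
        exact r.valid j

/-- Strategies of player Min: mappings from finite runs to moves that are
available whenever the last configuration belongs to Min. -/
def MinStrategy (G : Arena Conf Move) : Type :=
  {σ : G.FinRun → Move // ∀ r : G.FinRun, G.IsMin r.last → ∃ q', G.Tr r.last (σ r) q'}

/-- Strategies of player Max. -/
def MaxStrategy (G : Arena Conf Move) : Type :=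
  {σ : G.FinRun → Move // ∀ r : G.FinRun, ¬ G.IsMin r.last → ∃ q', G.Tr r.last (σ r) q'}

/-- A strategy is positional if its choice depends only on the last configuration. -/
def Positional {G : Arena Conf Move} (σ : G.FinRun → Move) : Prop :=
  ∀ r r' : G.FinRun, r.last = r'.last → σ r = σ r'

/-- The finite prefixes of the unique play from `q0` in which Min uses `μ`
and Max uses `χ`. -/
def play (G : Arena Conf Move) (μ : G.MinStrategy) (χ : G.MaxStrategy) (q0 : Conf) :
    ℕ → G.FinRun
  | 0 => G.single q0
  | n + 1 =>
    let r := G.play μ χ q0 n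
    if h : G.IsMin r.last then
      r.extend (μ.1 r) (Classical.choose (μ.2 r h)) (Classical.choose_spec (μ.2 r h))
    else
      r.extend (χ.1 r) (Classical.choose (χ.2 r h)) (Classical.choose_spec (χ.2 r h))

/-- Total cost (e.g. total time) of a finite run. -/
def FinRun.time {G : Arena Conf Move} (r : G.FinRun) : ℝ :=
  ∑ i : Fin r.n, G.cost (r.q i.castSucc) (r.m i)

/-- Payoff of player Min (to be minimised): limsup of average cost. -/
def AMin (G : Arena Conf Move) (q0 : Conf) (μ : G.MinStrategy) (χ : G.MaxStrategy) : ℝ :=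
  Filter.limsup (fun n : ℕ => (G.play μ χ q0 n).time / n) Filter.atTop

/-- Payoff of player Max (to be maximised): liminf of average cost. -/
def AMax (G : Arena Conf Move) (q0 : Conf) (μ : G.MinStrategy) (χ : G.MaxStrategy) : ℝ :=
  Filter.liminf (fun n : ℕ => (G.play μ χ q0 n).time / n) Filter.atTop

/-- Upper value of the game at `q0`. -/
def upperVal (G : Arena Conf Move) (q0 : Conf) : ℝ :=
  ⨅ μ : G.MinStrategy, ⨆ χ : G.MaxStrategy, G.AMin q0 μ χ

/-- Lower value of the game at `q0`. -/
def lowerVal (G : Arena Conf Move) (q0 : Conf) : ℝ :=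
  ⨆ χ : G.MaxStrategy, ⨅ μ : G.MinStrategy, G.AMax q0 μ χ

/-- The value of the game at `q0` (meaningful when the game is determined). -/
def val (G : Arena Conf Move) (q0 : Conf) : ℝ := G.upperVal q0

end Arena
/-- `k`-bounded clock valuations. -/
def IsVal (k : ℕ) {C : Type} (ν : C → ℝ) : Prop := ∀ c, 0 ≤ ν c ∧ ν c ≤ (k : ℝ)

/-- Two clock valuations satisfy exactly the same simple clock constraints
`c ⋈ i` and `c − c' ⋈ i` with `i ∈ {0,…,k}` and `⋈ ∈ {<,=,>}` (hence also ≤, ≥). -/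
def RegEq (k : ℕ) {C : Type} (ν ν' : C → ℝ) : Prop :=
  ∀ i : ℕ, i ≤ k → ∀ c c' : C,
    ((ν c < (i : ℝ) ↔ ν' c < (i : ℝ)) ∧ (ν c = (i : ℝ) ↔ ν' c = (i : ℝ)) ∧
      ((i : ℝ) < ν c ↔ (i : ℝ) < ν' c)) ∧
    ((ν c - ν c' < (i : ℝ) ↔ ν' c - ν' c' < (i : ℝ)) ∧
      (ν c - ν c' = (i : ℝ) ↔ ν' c - ν' c' = (i : ℝ)) ∧
      ((i : ℝ) < ν c - ν c' ↔ (i : ℝ) < ν' c - ν' c'))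

/-- An average-time game on a (bounded) timed automaton: a timed automaton
together with a partition of locations between players Min and Max. -/
structure TimedGame where
  L : Type
  C : Type
  A : Type
  finL : Finite L
  finC : Finite C
  finA : Finite A
  k : ℕ
  S : Set (L × (C → ℝ))
  En : A → Set (L × (C → ℝ))
  δ : L → A → L
  ϱ : A → Set C
  LMin : Set L
  bounded : ∀ s ∈ S, IsVal k s.2
  S_zone : (∀ (ℓ : L) (ν ν' : C → ℝ), RegEq k ν ν' → ((ℓ, ν) ∈ S ↔ (ℓ, ν') ∈ S)) ∧
    ∀ ℓ : L, Convex ℝ {ν : C → ℝ | (ℓ, ν) ∈ S}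
  En_sub : ∀ a, En a ⊆ S
  En_zone : ∀ a : A,
    (∀ (ℓ : L) (ν ν' : C → ℝ), RegEq k ν ν' → ((ℓ, ν) ∈ En a ↔ (ℓ, ν') ∈ En a)) ∧
    ∀ ℓ : L, Convex ℝ {ν : C → ℝ | (ℓ, ν) ∈ En a}
  nonstuck : ∀ s ∈ S, ∃ (t : ℝ) (a : A), 0 ≤ t ∧
    (∀ t', 0 ≤ t' → t' ≤ t → (s.1, fun c => s.2 c + t') ∈ S) ∧
    ((s.1, fun c => s.2 c + t) ∈ En a) ∧
    ((δ s.1 a, fun c => if c ∈ ϱ a then 0 else s.2 c + t) ∈ S)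

namespace TimedGame

/-- Configurations of the timed automaton. -/
abbrev Q (T : TimedGame) : Type := T.L × (T.C → ℝ)

/-- Resetting the clocks in `X` to zero. -/
def resetv (T : TimedGame) (ν : T.C → ℝ) (X : Set T.C) : T.C → ℝ :=
  fun c => if c ∈ X then 0 else ν c

/-- The successor configuration after the timed action `τ = (t, a)`. -/
def tsucc (T : TimedGame) (s : T.Q) (τ : ℝ × T.A) : T.Q :=
  (T.δ s.1 τ.2, T.resetv (fun c => s.2 c + τ.1) (T.ϱ τ.2))

/-- The transition relation `s →_τ s'` of the timed automaton. -/
def Trans (T : TimedGame) (s : T.Q) (τ : ℝ × T.A) (s' : T.Q) : Prop :=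
  0 ≤ τ.1 ∧ (∀ t', 0 ≤ t' → t' ≤ τ.1 → (s.1, fun c => s.2 c + t') ∈ T.S) ∧
  ((s.1, fun c => s.2 c + τ.1) ∈ T.En τ.2) ∧ s' = T.tsucc s τ ∧ s' ∈ T.S

/-- The game arena of the average-time game played on the timed automaton. -/
def taArena (T : TimedGame) : Arena {s : T.Q // s ∈ T.S} (ℝ × T.A) where
  Tr := fun s τ s' => T.Trans s.1 τ s'.1
  cost := fun _ τ => τ.1
  IsMin := fun s => s.1.1 ∈ T.LMin

/-- A clock region: an equivalence class of the region equivalence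
(restricted to `k`-bounded valuations). -/
def IsClockRegion (T : TimedGame) (P : Set (T.C → ℝ)) : Prop :=
  ∃ ν : T.C → ℝ, P = {ν' | IsVal T.k ν' ∧ RegEq T.k ν ν'}

/-- Regions: pairs of a location and a clock region. -/
def Region (T : TimedGame) : Type :=
  T.L × {P : Set (T.C → ℝ) // T.IsClockRegion P}

/-- The clock region of a valuation. -/
def clockRegionOf (T : TimedGame) (ν : T.C → ℝ) : {P : Set (T.C → ℝ) // T.IsClockRegion P} :=
  ⟨{ν' | IsVal T.k ν' ∧ RegEq T.k ν ν'}, ⟨ν, rfl⟩⟩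

/-- The region `[s]` of a configuration `s`. -/
def regionOf (T : TimedGame) (s : T.Q) : T.Region := (s.1, T.clockRegionOf s.2)

/-- The configurations `Ω` of the region graphs: pairs of a configuration
of the timed automaton and a region. -/
abbrev Omega (T : TimedGame) : Type := T.Q × T.Region

/-- `(s, (ℓ, P))` is a state of the closed region graph: the locations match
and `s`'s valuation lies in the closure of the clock region `P`. -/
def barS (T : TimedGame) (q : T.Omega) : Prop :=
  q.1.1 = q.2.1 ∧ q.1.2 ∈ closure q.2.2.1

/-- `(s, (ℓ, P))` is a state of the region graph: the locations match and
`s`'s valuation lies in the clock region `P`. -/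
def tildeS (T : TimedGame) (q : T.Omega) : Prop :=
  q.1.1 = q.2.1 ∧ q.1.2 ∈ q.2.2.1

/-- `R →_* R'` : the region `R'` is a time successor of `R`. -/
def timeSucc (T : TimedGame) (R R' : T.Region) : Prop :=
  R.1 = R'.1 ∧ ∀ ν ∈ R.2.1, ∃ t : ℝ, 0 ≤ t ∧
    (∀ t', 0 ≤ t' → t' ≤ t → (R.1, fun c => ν c + t') ∈ T.S) ∧
    (fun c => ν c + t) ∈ R'.2.1

/-- The discrete transition `s →^a s'` of the timed automaton. -/
def astep (T : TimedGame) (s : T.Q) (a : T.A) (s' : T.Q) : Prop :=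
  s ∈ T.S ∧ s' ∈ T.S ∧ s ∈ T.En a ∧ s' = (T.δ s.1 a, T.resetv s.2 (T.ϱ a))

/-- `R →^a R'` at the level of regions. -/
def regAct (T : TimedGame) (R : T.Region) (a : T.A) (R' : T.Region) : Prop :=
  ∃ ν ∈ R.2.1, ∃ ν' ∈ R'.2.1, T.astep (R.1, ν) a (R'.1, ν')

/-- Moves of the region graphs: a delay, an intermediate region, and an action. -/
abbrev RMove (T : TimedGame) : Type := ℝ × T.Region × T.A

/-- Transitions underlying pre-runs: `(s', R') = succ((s,R), (t,R'',a))` with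
`R →_* R'' →^a R'`. -/
def preTrans (T : TimedGame) (q : T.Omega) (m : T.RMove) (q' : T.Omega) : Prop :=
  0 ≤ m.1 ∧ T.timeSucc q.2 m.2.1 ∧ T.regAct m.2.1 m.2.2 q'.2 ∧
  q'.1 = T.tsucc q.1 (m.1, m.2.2)

/-- Labelled transitions of the closed region graph `T̄`. -/
def cTrans (T : TimedGame) (q : T.Omega) (m : T.RMove) (q' : T.Omega) : Prop :=
  T.preTrans q m q' ∧ T.barS q ∧ T.barS q' ∧
  (fun c => q.1.2 c + m.1) ∈ closure m.2.1.2.1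

/-- Labelled transitions of the boundary region graph `T̂`: additionally the
intermediate valuation lies on the boundary of the intermediate region. -/
def bTrans (T : TimedGame) (q : T.Omega) (m : T.RMove) (q' : T.Omega) : Prop :=
  T.cTrans q m q' ∧ (fun c => q.1.2 c + m.1) ∈ frontier m.2.1.2.1

/-- Labelled transitions of the region graph `T̃`. -/
def rTrans (T : TimedGame) (q : T.Omega) (m : T.RMove) (q' : T.Omega) : Prop :=
  T.preTrans q m q' ∧ T.tildeS q ∧ T.tildeS q' ∧
  (fun c => q.1.2 c + m.1) ∈ m.2.1.2.1

/-- The arena of pre-runs over `Ω`. -/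
def preArena (T : TimedGame) : Arena T.Omega T.RMove where
  Tr := T.preTrans
  cost := fun _ m => m.1
  IsMin := fun q => q.2.1 ∈ T.LMin

/-- Finite pre-runs. -/
abbrev PreRunF (T : TimedGame) : Type := (T.preArena).FinRun

/-- Pre-strategies of Min. -/
abbrev MinPre (T : TimedGame) : Type := (T.preArena).MinStrategy

/-- Pre-strategies of Max. -/
abbrev MaxPre (T : TimedGame) : Type := (T.preArena).MaxStrategy

/-- A pre-strategy of Min is a strategy in the closed region graph `T̄`
if it always waits into the closure of the chosen intermediate region. -/
def MinClosed (T : TimedGame) (μ : T.MinPre) : Prop :=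
  ∀ r : T.PreRunF,
    (fun c => (Arena.FinRun.last r).1.2 c + (μ.1 r).1) ∈ closure (μ.1 r).2.1.2.1

def MaxClosed (T : TimedGame) (χ : T.MaxPre) : Prop :=
  ∀ r : T.PreRunF,
    (fun c => (Arena.FinRun.last r).1.2 c + (χ.1 r).1) ∈ closure (χ.1 r).2.1.2.1

/-- Admissible strategies: strategies in the region graph `T̃`. -/
def MinAdmissible (T : TimedGame) (μ : T.MinPre) : Prop :=
  ∀ r : T.PreRunF,
    (fun c => (Arena.FinRun.last r).1.2 c + (μ.1 r).1) ∈ (μ.1 r).2.1.2.1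

def MaxAdmissible (T : TimedGame) (χ : T.MaxPre) : Prop :=
  ∀ r : T.PreRunF,
    (fun c => (Arena.FinRun.last r).1.2 c + (χ.1 r).1) ∈ (χ.1 r).2.1.2.1

/-- Boundary strategies of Min: the delay is the **infimum** of the delays
reaching the closure of the chosen intermediate region. -/
def MinBoundary (T : TimedGame) (μ : T.MinPre) : Prop :=
  ∀ r : T.PreRunF,
    (μ.1 r).1 = sInf {t : ℝ | 0 ≤ t ∧
      (fun c => (Arena.FinRun.last r).1.2 c + t) ∈ closure (μ.1 r).2.1.2.1}

/-- Boundary strategies of Max: the delay is the **supremum** of the delays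
reaching the closure of the chosen intermediate region. -/
def MaxBoundary (T : TimedGame) (χ : T.MaxPre) : Prop :=
  ∀ r : T.PreRunF,
    (χ.1 r).1 = sSup {t : ℝ | 0 ≤ t ∧
      (fun c => (Arena.FinRun.last r).1.2 c + t) ∈ closure (χ.1 r).2.1.2.1}

/-- The sequence of regions visited by a finite pre-run (its type, part 1). -/
def typeConfs (T : TimedGame) (r : T.PreRunF) : ℕ → Option T.Region :=
  fun i => if h : i < r.n + 1 then some ((r.q ⟨i, h⟩).2) else none

/-- The sequence of intermediate regions and actions of a finite pre-run
(its type, part 2). -/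
def typeMoves (T : TimedGame) (r : T.PreRunF) : ℕ → Option (T.Region × T.A) :=
  fun i => if h : i < r.n then some ((r.m ⟨i, h⟩).2) else none

/-- Two finite pre-runs have the same type. -/
def sameType (T : TimedGame) (r r' : T.PreRunF) : Prop :=
  T.typeConfs r = T.typeConfs r' ∧ T.typeMoves r = T.typeMoves r'

/-- The waiting time `t(s, α)` of the boundary timed action `α = (b, c, a)`. -/
def tOf (T : TimedGame) (s : T.Q) (α : ℕ × T.C × T.A) : ℝ :=
  if s.2 α.2.1 ≤ (α.1 : ℝ) then (α.1 : ℝ) - s.2 α.2.1 else 0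

/-- Type-preserving boundary strategies of Min: runs of the same type are
assigned the same intermediate region, action and boundary timed action. -/
def MinTP (T : TimedGame) (μ : T.MinPre) : Prop :=
  T.MinBoundary μ ∧
  ∀ r r' : T.PreRunF, T.sameType r r' →
    (μ.1 r).2 = (μ.1 r').2 ∧
    ∃ (b : ℕ) (c : T.C), b ≤ T.k ∧
      (μ.1 r).1 = T.tOf (Arena.FinRun.last r).1 (b, c, (μ.1 r).2.2) ∧
      (μ.1 r').1 = T.tOf (Arena.FinRun.last r').1 (b, c, (μ.1 r').2.2)

def MaxTP (T : TimedGame) (χ : T.MaxPre) : Prop :=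
  T.MaxBoundary χ ∧
  ∀ r r' : T.PreRunF, T.sameType r r' →
    (χ.1 r).2 = (χ.1 r').2 ∧
    ∃ (b : ℕ) (c : T.C), b ≤ T.k ∧
      (χ.1 r).1 = T.tOf (Arena.FinRun.last r).1 (b, c, (χ.1 r).2.2) ∧
      (χ.1 r').1 = T.tOf (Arena.FinRun.last r').1 (b, c, (χ.1 r').2.2)

/-- `μ_ε` is `ε`-close to the type-preserving boundary strategy `μ` of Min. -/
def EpsCloseMin (T : TimedGame) (μ με : T.MinPre) (ε : ℝ) : Prop :=
  ∀ r : T.PreRunF, (με.1 r).2 = (μ.1 r).2 ∧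
    (fun c => (Arena.FinRun.last r).1.2 c + (με.1 r).1) ∈ (μ.1 r).2.1.2.1 ∧
    (με.1 r).1 ≤ (μ.1 r).1 + ε

/-- `χ_ε` is `ε`-close to the type-preserving boundary strategy `χ` of Max. -/
def EpsCloseMax (T : TimedGame) (χ χε : T.MaxPre) (ε : ℝ) : Prop :=
  ∀ r : T.PreRunF, (χε.1 r).2 = (χ.1 r).2 ∧
    (fun c => (Arena.FinRun.last r).1.2 c + (χε.1 r).1) ∈ (χ.1 r).2.1.2.1 ∧
    (χ.1 r).1 - ε ≤ (χε.1 r).1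

/-- Upper value of the game on the subgraph of region graphs whose strategies
are the pre-strategies satisfying `PMin`, `PMax` respectively. -/
def upperG (T : TimedGame) (PMin : T.MinPre → Prop) (PMax : T.MaxPre → Prop)
    (q : T.Omega) : ℝ :=
  ⨅ μ : {μ : T.MinPre // PMin μ}, ⨆ χ : {χ : T.MaxPre // PMax χ},
    Arena.AMin T.preArena q μ.1 χ.1

/-- Lower value. -/
def lowerG (T : TimedGame) (PMin : T.MinPre → Prop) (PMax : T.MaxPre → Prop)
    (q : T.Omega) : ℝ :=
  ⨆ χ : {χ : T.MaxPre // PMax χ}, ⨅ μ : {μ : T.MinPre // PMin μ},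
    Arena.AMax T.preArena q μ.1 χ.1

def upperBar (T : TimedGame) : T.Omega → ℝ := T.upperG T.MinClosed T.MaxClosed
def lowerBar (T : TimedGame) : T.Omega → ℝ := T.lowerG T.MinClosed T.MaxClosed
/-- The value of the average-time game on the closed region graph `T̄`. -/
def valBar (T : TimedGame) : T.Omega → ℝ := T.upperBar

def upperHat (T : TimedGame) : T.Omega → ℝ := T.upperG T.MinBoundary T.MaxBoundary
def lowerHat (T : TimedGame) : T.Omega → ℝ := T.lowerG T.MinBoundary T.MaxBoundary
/-- The value of the average-time game on the boundary region graph `T̂`. -/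
def valHat (T : TimedGame) : T.Omega → ℝ := T.upperHat

def upperTilde (T : TimedGame) : T.Omega → ℝ := T.upperG T.MinAdmissible T.MaxAdmissible
def lowerTilde (T : TimedGame) : T.Omega → ℝ := T.lowerG T.MinAdmissible T.MaxAdmissible
/-- The value of the average-time game on the region graph `T̃`. -/
def valTilde (T : TimedGame) : T.Omega → ℝ := T.upperTilde

/-- A function is simple on a set `X` of configurations. -/
def SimpleOn (T : TimedGame) (X : Set T.Omega) (F : T.Omega → ℝ) : Prop :=
  (∃ e : ℤ, ∀ q ∈ X, F q = (e : ℝ)) ∨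
  (∃ (e : ℤ) (c : T.C), ∀ q ∈ X, F q = (e : ℝ) - q.1.2 c)

/-- A function on the configurations of the closed region graph is regionally
simple. -/
def RegionallySimple (T : TimedGame) (F : T.Omega → ℝ) : Prop :=
  ∀ R : T.Region, T.SimpleOn {q : T.Omega | T.barS q ∧ q.2 = R} F

/-- A function on the configurations of the closed region graph is regionally
constant. -/
def RegionallyConstant (T : TimedGame) (F : T.Omega → ℝ) : Prop :=
  ∀ R : T.Region, ∃ v : ℝ, ∀ q : T.Omega, T.barS q → q.2 = R → F q = v

/-- The configuration `(s, [s])` of the region graphs determined by a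
configuration `s` of the timed automaton. -/
def confOf (T : TimedGame) (s : T.Q) : T.Omega := (s, T.regionOf s)

/-- A region is thin if some clock has an integer value throughout its closure. -/
def Thin (T : TimedGame) (R : T.Region) : Prop :=
  ∃ c : T.C, ∀ ν ∈ closure R.2.1, ∃ m : ℤ, ν c = (m : ℝ)

/-- `R'` is the immediate time successor of `R`. -/
def ImmTimeSucc (T : TimedGame) (R R' : T.Region) : Prop :=
  R.1 = R'.1 ∧ ∀ ν ∈ R.2.1, ∃ ε : ℝ, 0 < ε ∧
    ∀ t : ℝ, 0 < t → t < ε → (fun c => ν c + t) ∈ R'.2.1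

end TimedGame

section Helpers

attribute [local instance] Classical.propDecidable

namespace Arena

variable {Conf Move : Type}

lemma FinRun.time_extend {G : Arena Conf Move} (r : G.FinRun)
    (mv : Move) (q' : Conf) (h : G.Tr r.last mv q') :
    (r.extend mv q' h).time = r.time + G.cost r.last mv := by
  unfold Arena.FinRun.time Arena.FinRun.extend
  rw [Fin.sum_univ_castSucc]
  simp [Arena.FinRun.last, Fin.snoc_castSucc, Fin.snoc_last]

lemma FinRun.extend_last {G : Arena Conf Move} (r : G.FinRun)
    (mv : Move) (q' : Conf) (h : G.Tr r.last mv q') :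
    (r.extend mv q' h).last = q' := by
  simp [Arena.FinRun.last, Arena.FinRun.extend, Fin.snoc_last]

lemma play_n (G : Arena Conf Move) (μ : G.MinStrategy) (χ : G.MaxStrategy)
    (q0 : Conf) : ∀ n, (Arena.play G μ χ q0 n).n = n
  | 0 => rfl
  | n + 1 => by
    show (Arena.play G μ χ q0 (n+1)).n = n + 1
    simp only [Arena.play]
    split <;>
      · show (Arena.play G μ χ q0 n).n + 1 = n + 1
        rw [play_n G μ χ q0 n]

end Arena

end Helpers

namespace TimedGame

variable {T : TimedGame}

lemma typeConfs_at (T : TimedGame) {r : T.PreRunF} {n : ℕ} (hn : r.n = n) :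
    T.typeConfs r n = some r.last.2 := by
  subst hn
  unfold TimedGame.typeConfs
  rw [dif_pos (Nat.lt_succ_self r.n)]
  rfl

lemma typeMoves_extend_at (T : TimedGame) {r : T.PreRunF} (mv : T.RMove) (s' : T.Omega)
    (htr : T.preArena.Tr r.last mv s') {n : ℕ} (hn : r.n = n) :
    T.typeMoves (r.extend mv s' htr) n = some mv.2 := by
  subst hn
  unfold TimedGame.typeMoves
  have hlt : r.n < (Arena.FinRun.extend r mv s' htr).n := Nat.lt_succ_self r.n
  rw [dif_pos hlt]
  show some ((Fin.snoc r.m mv : Fin (r.n + 1) → T.RMove) (Fin.last r.n)).2 = some mv.2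
  rw [Fin.snoc_last]

lemma last_region_eq {r₁ r₂ : T.PreRunF} (hs : T.sameType r₁ r₂) {n : ℕ}
    (h₁ : r₁.n = n) (h₂ : r₂.n = n) : r₁.last.2 = r₂.last.2 := by
  have h := congrFun hs.1 n
  rw [typeConfs_at T h₁, typeConfs_at T h₂] at h
  exact Option.some.inj h

lemma play_succ_cases (T : TimedGame) (μ : T.MinPre) (χ : T.MaxPre) (q : T.Omega) (n : ℕ) :
    ∃ (mv : T.RMove) (s' : T.Omega),
      T.preTrans (Arena.play T.preArena μ χ q n).last mv s' ∧
      (Arena.play T.preArena μ χ q (n+1)).time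
        = (Arena.play T.preArena μ χ q n).time + mv.1 ∧
      (Arena.play T.preArena μ χ q (n+1)).last = s' ∧
      T.typeMoves (Arena.play T.preArena μ χ q (n+1)) n = some mv.2 ∧
      ((Arena.play T.preArena μ χ q n).last.2.1 ∈ T.LMin →
        mv = μ.1 (Arena.play T.preArena μ χ q n)) ∧
      ((Arena.play T.preArena μ χ q n).last.2.1 ∉ T.LMin →
        mv = χ.1 (Arena.play T.preArena μ χ q n)) := by
  by_cases h : T.preArena.IsMin (Arena.play T.preArena μ χ q n).last
  · have e : Arena.play T.preArena μ χ q (n+1)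
        = (Arena.play T.preArena μ χ q n).extend
            (μ.1 (Arena.play T.preArena μ χ q n))
            (Classical.choose (μ.2 _ h)) (Classical.choose_spec (μ.2 _ h)) := by
      simp only [Arena.play]
      rw [dif_pos h]
    refine ⟨μ.1 (Arena.play T.preArena μ χ q n), Classical.choose (μ.2 _ h),
      Classical.choose_spec (μ.2 _ h), ?_, ?_, ?_, fun _ => rfl, fun hc => absurd h hc⟩
    · rw [e, Arena.FinRun.time_extend]; rfl
    · rw [e, Arena.FinRun.extend_last]
    · rw [e]; exact typeMoves_extend_at T _ _ _ (Arena.play_n _ _ _ _ n)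
  · have e : Arena.play T.preArena μ χ q (n+1)
        = (Arena.play T.preArena μ χ q n).extend
            (χ.1 (Arena.play T.preArena μ χ q n))
            (Classical.choose (χ.2 _ h)) (Classical.choose_spec (χ.2 _ h)) := by
      simp only [Arena.play]
      rw [dif_neg h]
    refine ⟨χ.1 (Arena.play T.preArena μ χ q n), Classical.choose (χ.2 _ h),
      Classical.choose_spec (χ.2 _ h), ?_, ?_, ?_, fun hc => absurd hc h, fun _ => rfl⟩
    · rw [e, Arena.FinRun.time_extend]; rfl
    · rw [e, Arena.FinRun.extend_last]
    · rw [e]; exact typeMoves_extend_at T _ _ _ (Arena.play_n _ _ _ _ n)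

end TimedGame

/-- Against a type-preserving boundary strategy of the opponent, switching to a
type-matching type-preserving boundary strategy can only improve the total
time of every finite prefix of the run. -/
theorem nstep_typePreserving_is_better (T : TimedGame) :
    (∀ χ : T.MaxPre, T.MaxTP χ → ∀ μ : T.MinPre, T.MinClosed μ →
      ∀ q : T.Omega, T.barS q → ∀ μ' : T.MinPre, T.MinTP μ' →
      (∀ n : ℕ, T.sameType (Arena.play T.preArena μ' χ q n)
        (Arena.play T.preArena μ χ q n)) →
      ∀ n : ℕ, Arena.FinRun.time (Arena.play T.preArena μ' χ q n) ≤
        Arena.FinRun.time (Arena.play T.preArena μ χ q n)) ∧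
    (∀ μ : T.MinPre, T.MinTP μ → ∀ χ : T.MaxPre, T.MaxClosed χ →
      ∀ q : T.Omega, T.barS q → ∀ χ' : T.MaxPre, T.MaxTP χ' →
      (∀ n : ℕ, T.sameType (Arena.play T.preArena μ χ' q n)
        (Arena.play T.preArena μ χ q n)) →
      ∀ n : ℕ, Arena.FinRun.time (Arena.play T.preArena μ χ q n) ≤
        Arena.FinRun.time (Arena.play T.preArena μ χ' q n)) := by
  constructor
  · intro χ hχ μ hμ q hq μ' hμ' hsame n
    have key : ∀ n : ℕ,
        (Arena.play T.preArena μ' χ q n).time ≤ (Arena.play T.preArena μ χ q n).time ∧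
        ∀ x : T.C,
          (Arena.play T.preArena μ' χ q n).time
            - (Arena.play T.preArena μ' χ q n).last.1.2 x
          ≤ (Arena.play T.preArena μ χ q n).time
            - (Arena.play T.preArena μ χ q n).last.1.2 x := by
      intro n
      induction n with
      | zero =>
        constructor
        · exact le_refl _
        · intro x; exact le_refl _
      | succ n ih =>
        obtain ⟨mv', s', htr', htime', hlast', hmv', hminc', hmaxc'⟩ :=
          TimedGame.play_succ_cases T μ' χ q n
        obtain ⟨mv, s, htr, htime, hlast, hmv, hminc, hmaxc⟩ :=
          TimedGame.play_succ_cases T μ χ q n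
        have hn' := Arena.play_n T.preArena μ' χ q n
        have hn := Arena.play_n T.preArena μ χ q n
        have hreg := TimedGame.last_region_eq (hsame n) hn' hn
        have hmveq : mv'.2 = mv.2 := by
          have h := congrFun (hsame (n+1)).2 n
          rw [hmv', hmv] at h
          exact Option.some.inj h
        have hstep : ∃ (b : ℕ) (c : T.C),
            mv'.1 = T.tOf (Arena.play T.preArena μ' χ q n).last.1 (b, c, mv'.2.2) ∧
            T.tOf (Arena.play T.preArena μ χ q n).last.1 (b, c, mv.2.2) ≤ mv.1 := by
          by_cases h : (Arena.play T.preArena μ χ q n).last.2.1 ∈ T.LMin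
          · have h' : (Arena.play T.preArena μ' χ q n).last.2.1 ∈ T.LMin := by
              rw [hreg]; exact h
            have e' := hminc' h'
            have e := hminc h
            obtain ⟨h2, b, c, -, ht', htB⟩ := hμ'.2 _ _ (hsame n)
            refine ⟨b, c, ?_, ?_⟩
            · rw [e']; exact ht'
            · have hreg2 : (μ'.1 (Arena.play T.preArena μ χ q n)).2 = mv.2 := by
                rw [← h2, ← e']; exact hmveq
              have hmem : mv.1 ∈ {t : ℝ | 0 ≤ t ∧
                  (fun c => (Arena.FinRun.last (Arena.play T.preArena μ χ q n)).1.2 c + t)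
                    ∈ closure (μ'.1 (Arena.play T.preArena μ χ q n)).2.1.2.1} := by
                refine ⟨htr.1, ?_⟩
                rw [hreg2, e]
                exact hμ _
              have hinf : (μ'.1 (Arena.play T.preArena μ χ q n)).1 ≤ mv.1 := by
                rw [hμ'.1 _]
                exact csInf_le ⟨0, fun x hx => hx.1⟩ hmem
              calc T.tOf (Arena.play T.preArena μ χ q n).last.1 (b, c, mv.2.2)
                  = (μ'.1 (Arena.play T.preArena μ χ q n)).1 := htB.symm
                _ ≤ mv.1 := hinf
          · have h' : (Arena.play T.preArena μ' χ q n).last.2.1 ∉ T.LMin := by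
              rw [hreg]; exact h
            have e' := hmaxc' h'
            have e := hmaxc h
            obtain ⟨h2, b, c, -, ht', htB⟩ := hχ.2 _ _ (hsame n)
            refine ⟨b, c, ?_, ?_⟩
            · rw [e']; exact ht'
            · rw [e]; exact le_of_eq htB.symm
        obtain ⟨b, c, ht', hble⟩ := hstep
        have hmv0 : (0:ℝ) ≤ mv.1 := htr.1
        have hT : (Arena.play T.preArena μ' χ q n).time + mv'.1
            ≤ (Arena.play T.preArena μ χ q n).time + mv.1 := by
          have h1 := ih.1
          have h2 := ih.2 c
          rw [ht']
          simp only [TimedGame.tOf] at hble ⊢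
          split_ifs at hble ⊢ <;> linarith
        constructor
        · rw [htime', htime]; exact hT
        · intro x
          rw [htime', htime, hlast', hlast, htr'.2.2.2, htr.2.2.2]
          have hact : mv'.2.2 = mv.2.2 := congrArg Prod.snd hmveq
          rw [hact]
          simp only [TimedGame.tsucc, TimedGame.resetv]
          by_cases hx : x ∈ T.ϱ mv.2.2
          · simp only [if_pos hx]; linarith
          · simp only [if_neg hx]
            have h2 := ih.2 x
            linarith
    exact (key n).1
  · intro μ hμ χ hχ q hq χ' hχ' hsame n
    have key : ∀ n : ℕ,
        (Arena.play T.preArena μ χ q n).time ≤ (Arena.play T.preArena μ χ' q n).time ∧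
        ∀ x : T.C,
          (Arena.play T.preArena μ χ q n).time
            - (Arena.play T.preArena μ χ q n).last.1.2 x
          ≤ (Arena.play T.preArena μ χ' q n).time
            - (Arena.play T.preArena μ χ' q n).last.1.2 x := by
      intro n
      induction n with
      | zero =>
        constructor
        · exact le_refl _
        · intro x; exact le_refl _
      | succ n ih =>
        obtain ⟨mv', s', htr', htime', hlast', hmv', hminc', hmaxc'⟩ :=
          TimedGame.play_succ_cases T μ χ' q n
        obtain ⟨mv, s, htr, htime, hlast, hmv, hminc, hmaxc⟩ :=
          TimedGame.play_succ_cases T μ χ q n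
        have hn' := Arena.play_n T.preArena μ χ' q n
        have hn := Arena.play_n T.preArena μ χ q n
        have hreg := TimedGame.last_region_eq (hsame n) hn' hn
        have hmveq : mv'.2 = mv.2 := by
          have h := congrFun (hsame (n+1)).2 n
          rw [hmv', hmv] at h
          exact Option.some.inj h
        have hstep : ∃ (b : ℕ) (c : T.C),
            mv'.1 = T.tOf (Arena.play T.preArena μ χ' q n).last.1 (b, c, mv'.2.2) ∧
            mv.1 ≤ T.tOf (Arena.play T.preArena μ χ q n).last.1 (b, c, mv.2.2) := by
          by_cases h : (Arena.play T.preArena μ χ q n).last.2.1 ∈ T.LMin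
          · have h' : (Arena.play T.preArena μ χ' q n).last.2.1 ∈ T.LMin := by
              rw [hreg]; exact h
            have e' := hminc' h'
            have e := hminc h
            obtain ⟨h2, b, c, -, ht', htB⟩ := hμ.2 _ _ (hsame n)
            refine ⟨b, c, ?_, ?_⟩
            · rw [e']; exact ht'
            · rw [e]; exact le_of_eq htB
          · have h' : (Arena.play T.preArena μ χ' q n).last.2.1 ∉ T.LMin := by
              rw [hreg]; exact h
            have e' := hmaxc' h'
            have e := hmaxc h
            obtain ⟨h2, b, c, -, ht', htB⟩ := hχ'.2 _ _ (hsame n)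
            refine ⟨b, c, ?_, ?_⟩
            · rw [e']; exact ht'
            · have hreg2 : (χ'.1 (Arena.play T.preArena μ χ q n)).2 = mv.2 := by
                rw [← h2, ← e']; exact hmveq
              have hmem : mv.1 ∈ {t : ℝ | 0 ≤ t ∧
                  (fun c => (Arena.FinRun.last (Arena.play T.preArena μ χ q n)).1.2 c + t)
                    ∈ closure (χ'.1 (Arena.play T.preArena μ χ q n)).2.1.2.1} := by
                refine ⟨htr.1, ?_⟩
                rw [hreg2, e]
                exact hχ _
              obtain ⟨ν₀, hP⟩ := (χ'.1 (Arena.play T.preArena μ χ q n)).2.1.2.2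
              have hbdd : BddAbove {t : ℝ | 0 ≤ t ∧
                  (fun c => (Arena.FinRun.last (Arena.play T.preArena μ χ q n)).1.2 c + t)
                    ∈ closure (χ'.1 (Arena.play T.preArena μ χ q n)).2.1.2.1} := by
                refine ⟨(T.k : ℝ) - (Arena.play T.preArena μ χ q n).last.1.2 c,
                  fun t ht => ?_⟩
                have hsub : (χ'.1 (Arena.play T.preArena μ χ q n)).2.1.2.1
                    ⊆ {w : T.C → ℝ | w c ≤ (T.k : ℝ)} := by
                  rw [hP]; intro w hw; exact (hw.1 c).2
                have hcl := closure_minimal hsub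
                  (isClosed_le (continuous_apply c) continuous_const)
                have hk := hcl ht.2
                simp only [Set.mem_setOf_eq] at hk
                linarith
              have hsup : mv.1 ≤ (χ'.1 (Arena.play T.preArena μ χ q n)).1 := by
                rw [hχ'.1 _]
                exact le_csSup hbdd hmem
              calc mv.1 ≤ (χ'.1 (Arena.play T.preArena μ χ q n)).1 := hsup
                _ = T.tOf (Arena.play T.preArena μ χ q n).last.1 (b, c, mv.2.2) := htB
        obtain ⟨b, c, ht', hble⟩ := hstep
        have hT : (Arena.play T.preArena μ χ q n).time + mv.1
            ≤ (Arena.play T.preArena μ χ' q n).time + mv'.1 := by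
          have h1 := ih.1
          have h2 := ih.2 c
          rw [ht']
          simp only [TimedGame.tOf] at hble ⊢
          split_ifs at hble ⊢ <;> linarith
        constructor
        · rw [htime', htime]; exact hT
        · intro x
          rw [htime', htime, hlast', hlast, htr'.2.2.2, htr.2.2.2]
          have hact : mv'.2.2 = mv.2.2 := congrArg Prod.snd hmveq
          rw [hact]
          simp only [TimedGame.tsucc, TimedGame.resetv]
          by_cases hx : x ∈ T.ϱ mv.2.2
          · simp only [if_pos hx]; linarith
          · simp only [if_neg hx]
            have h2 := ih.2 x
            linarith
    exact (key n).1
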